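/- Correctness of the diametric restriction: let A, B be δ-bounded-difference n×n matrices, C = A ⋆ B, fix block size m, and fix i, j. Suppose r ∈ [n]' ∩ K(i',j'). Then C_{i,j} = min over k such that blocks A^r_{I(i),I(k)} and B^r_{I(k),I(j)} are diametric (i.e. |A^r_{i',k'} + B^r_{k',j'}| ≤ 16δm) of (A_{i,k} + B_{k,j}). In other words, restricting the minimization to indices k whose blocks form diametric pairs does not change the min-plus value. -/
import Mathlib


/-- A matrix (as a function on `Fin n`) is `δ`-bounded-difference if entries at
adjacent positions (differing by 1 in one coordinate) differ by at most `δ`. -/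
def BDiff {n : ℕ} (δ : ℤ) (A : Fin n → Fin n → ℤ) : Prop :=
  ∀ i j i' j' : Fin n,
    ((i'.val = i.val + 1 ∧ j' = j) ∨ (i' = i ∧ j'.val = j.val + 1)) →
    |A i' j' - A i j| ≤ δ

/-- Representative (first element) of the length-`m` block containing `i`. -/
def rep {n : ℕ} (m : ℕ) (i : Fin n) : Fin n :=
  ⟨m * (i.val / m),
    lt_of_le_of_lt (by rw [Nat.mul_comm]; exact Nat.div_mul_le_self _ _) i.isLt⟩

/-- Min-plus product `C = A ⋆ B`. -/
def minplus {n : ℕ} (A B : Fin n → Fin n → ℤ) (i j : Fin n) : ℤ :=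
  Finset.inf' Finset.univ ⟨i, Finset.mem_univ i⟩ (fun k => A i k + B k j)

/-- Block-approximate min-plus product: minimum over representative indices. -/
def Ctil {n : ℕ} (m : ℕ) (A B : Fin n → Fin n → ℤ) (i j : Fin n) : ℤ :=
  Finset.inf' ((Finset.univ : Finset (Fin n)).filter fun k => m ∣ k.val)
    ⟨⟨0, i.pos⟩, by simp⟩ (fun k => A (rep m i) k + B k (rep m j))

/-- Candidate set `K(i',j')`. -/
def Kset {n : ℕ} (m : ℕ) (δ : ℤ) (A B : Fin n → Fin n → ℤ) (i j : Fin n) :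
    Finset (Fin n) :=
  Finset.univ.filter
    (fun k => m ∣ k.val ∧
      A (rep m i) k + B k (rep m j) ≤ Ctil m A B i j + 8 * δ * m)

lemma bdiff_row {n : ℕ} {δ : ℤ} {A : Fin n → Fin n → ℤ} (hA : BDiff δ A) (j : Fin n) :
    ∀ d : ℕ, ∀ i i2 : Fin n, i2.val = i.val + d → |A i2 j - A i j| ≤ δ * d := by
  intro d
  induction d with
  | zero =>
    intro i i2 h
    have : i2 = i := Fin.ext (by omega)
    simp [this]
  | succ d ih =>
    intro i i2 h
    have hlt : i.val + d < n := by have := i2.isLt; omega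
    set i1 : Fin n := ⟨i.val + d, hlt⟩ with hi1
    have hstep := hA i1 j i2 j (Or.inl ⟨by simp [hi1]; omega, rfl⟩)
    have hIH := ih i i1 rfl
    calc |A i2 j - A i j| ≤ |A i2 j - A i1 j| + |A i1 j - A i j| := abs_sub_le _ _ _
      _ ≤ δ + δ * d := add_le_add hstep hIH
      _ = δ * (d + 1 : ℕ) := by push_cast; ring

lemma bdiff_col {n : ℕ} {δ : ℤ} {A : Fin n → Fin n → ℤ} (hA : BDiff δ A) (i : Fin n) :
    ∀ d : ℕ, ∀ j j2 : Fin n, j2.val = j.val + d → |A i j2 - A i j| ≤ δ * d := by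
  intro d
  induction d with
  | zero =>
    intro j j2 h
    have : j2 = j := Fin.ext (by omega)
    simp [this]
  | succ d ih =>
    intro j j2 h
    have hlt : j.val + d < n := by have := j2.isLt; omega
    set j1 : Fin n := ⟨j.val + d, hlt⟩ with hj1
    have hstep := hA i j1 i j2 (Or.inr ⟨rfl, by simp [hj1]; omega⟩)
    have hIH := ih j j1 rfl
    calc |A i j2 - A i j| ≤ |A i j2 - A i j1| + |A i j1 - A i j| := abs_sub_le _ _ _
      _ ≤ δ + δ * d := add_le_add hstep hIH
      _ = δ * (d + 1 : ℕ) := by push_cast; ring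

lemma rep_val_add {n : ℕ} (m : ℕ) (i : Fin n) : i.val = (rep m i).val + i.val % m := by
  have := Nat.div_add_mod i.val m
  simp [rep]; omega

lemma rep_approx {n : ℕ} {δ : ℤ} {A : Fin n → Fin n → ℤ} (hA : BDiff δ A) (hδ : 0 ≤ δ)
    {m : ℕ} (hm : 0 < m) (i k : Fin n) :
    |A i k - A (rep m i) (rep m k)| ≤ 2 * (δ * m) := by
  have h1 : |A i k - A (rep m i) k| ≤ δ * (i.val % m : ℕ) :=
    bdiff_row hA k (i.val % m) (rep m i) i (rep_val_add m i)
  have h2 : |A (rep m i) k - A (rep m i) (rep m k)| ≤ δ * (k.val % m : ℕ) :=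
    bdiff_col hA (rep m i) (k.val % m) (rep m k) k (rep_val_add m k)
  have hb1 : ((i.val % m : ℕ) : ℤ) ≤ m := by exact_mod_cast (Nat.mod_lt _ hm).le
  have hb2 : ((k.val % m : ℕ) : ℤ) ≤ m := by exact_mod_cast (Nat.mod_lt _ hm).le
  have := mul_le_mul_of_nonneg_left hb1 hδ
  have := mul_le_mul_of_nonneg_left hb2 hδ
  calc |A i k - A (rep m i) (rep m k)|
      ≤ |A i k - A (rep m i) k| + |A (rep m i) k - A (rep m i) (rep m k)| := abs_sub_le _ _ _
    _ ≤ 2 * (δ * m) := by linarith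

lemma rep_fix {n : ℕ} {m : ℕ} {r : Fin n} (hr : m ∣ r.val) : rep m r = r :=
  Fin.ext (by simp [rep, Nat.mul_div_cancel' hr])

/-- correctness of the diametric restriction: if `r` is a
representative index with `r ∈ K(i',j')`, then the min-plus value `C_{i,j}`
equals the minimum of `A_{i,k} + B_{k,j}` over those `k` whose blocks form a
diametric pair, i.e. `|A^r_{i',k'} + B^r_{k',j'}| ≤ 16δm`. -/
theorem stmt19 {n : ℕ} (δ : ℤ) (hδ : 0 < δ) (A B : Fin n → Fin n → ℤ)
    (hA : BDiff δ A) (hB : BDiff δ B) (m : ℕ) (hm : m ∣ n) (i j r : Fin n)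
    (hr : m ∣ r.val) (hrK : r ∈ Kset m δ A B i j) :
    ((minplus A B i j : ℤ) : WithTop ℤ) =
      (Finset.univ.filter (fun k : Fin n =>
          |(A (rep m i) (rep m k) - A (rep m i) r) +
            (B (rep m k) (rep m j) - B r (rep m j))| ≤ 16 * δ * m)).inf
        (fun k => ((A i k + B k j : ℤ) : WithTop ℤ)) := by
  simp only [Kset, Finset.mem_filter, Finset.mem_univ, true_and] at hrK
  obtain ⟨-, hrC⟩ := hrK
  obtain ⟨k₀, -, hk₀⟩ := Finset.exists_mem_eq_inf'
    (⟨i, Finset.mem_univ i⟩ : (Finset.univ : Finset (Fin n)).Nonempty)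
    (fun k => A i k + B k j)
  have hmin : minplus A B i j = A i k₀ + B k₀ j := hk₀
  have hmem : k₀ ∈ Finset.univ.filter (fun k : Fin n =>
      |(A (rep m i) (rep m k) - A (rep m i) r) +
        (B (rep m k) (rep m j) - B r (rep m j))| ≤ 16 * δ * m) := by
    simp only [Finset.mem_filter, Finset.mem_univ, true_and]
    rcases Nat.eq_zero_or_pos m with hm0 | hmpos
    · subst hm0
      have h1 : rep 0 k₀ = r := Fin.ext (by simp [rep]; omega)
      simp [h1]
    · -- main quantitative bound
      have hδ' : 0 ≤ δ := hδ.le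
      have hCtil : Ctil m A B i j ≤ A (rep m i) (rep m k₀) + B (rep m k₀) (rep m j) := by
        apply Finset.inf'_le
        simp only [Finset.mem_filter, Finset.mem_univ, true_and]
        exact ⟨k₀.val / m, rfl⟩
      have h2 := abs_le.mp (rep_approx hA hδ' hmpos i k₀)
      have h3 := abs_le.mp (rep_approx hB hδ' hmpos k₀ j)
      have h4 := abs_le.mp (rep_approx hA hδ' hmpos i r)
      have h5 := abs_le.mp (rep_approx hB hδ' hmpos r j)
      rw [rep_fix hr] at h4 h5
      have hminr : A i k₀ + B k₀ j ≤ A i r + B r j := by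
        rw [← hmin]
        exact Finset.inf'_le _ (Finset.mem_univ r)
      have hδm : 0 ≤ δ * m := mul_nonneg hδ' (by positivity)
      rw [abs_le]
      constructor <;> linarith
  apply le_antisymm
  · apply Finset.le_inf
    intro k hk
    exact WithTop.coe_le_coe.mpr (Finset.inf'_le _ (Finset.mem_univ k))
  · rw [hmin]
    exact Finset.inf_le hmem
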